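/- For every positive integer n, the element wₙ = (ab)ⁿ(ba)⁻ⁿ of the free group F₂ is nontrivial and is not a proper power: there is no g ∈ F₂ and integer k ≥ 2 with gᵏ = wₙ. -/

import Mathlib

open List FreeGroup

namespace Stmt0Aux

variable {α : Type*} [DecidableEq α]

/-- The "no cancellation" relation between adjacent letters of a word. -/
def R (p q : α × Bool) : Prop := ¬(p.1 = q.1 ∧ p.2 = !q.2)

lemma reduce_eq_self_iff (L : List (α × Bool)) :
    FreeGroup.reduce L = L ↔ List.Chain' R L := by
  constructor
  · induction L with
    | nil => intro _; simp [List.Chain']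
    | cons x L ih =>
      intro h
      rw [FreeGroup.reduce.cons] at h
      rcases hL : FreeGroup.reduce L with _ | ⟨hd, tl⟩
      · rw [hL] at h
        simp only [] at h
        have hL0 : [] = L := by injection h
        rw [← hL0]
        simp [List.Chain']
      · rw [hL] at h
        simp only [] at h
        split_ifs at h with hc
        · exfalso
          have h1 : (FreeGroup.reduce L).length ≤ L.length :=
            FreeGroup.Red.length_le (FreeGroup.reduce.red)
          rw [hL] at h1
          have := congrArg List.length h
          simp at this h1
          omega
        · have hL' : L = hd :: tl := by
            have := h
            injection this with h1 h2
            exact h2.symm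
          have hred : FreeGroup.reduce L = L := by rw [hL, hL']
          have hch : List.Chain' R L := ih hred
          rw [hL']
          rw [hL'] at hch
          exact List.isChain_cons_cons.2 ⟨hc, hch⟩
  · induction L with
    | nil => intro _; rfl
    | cons x L ih =>
      intro h
      rw [FreeGroup.reduce.cons]
      have hL : FreeGroup.reduce L = L := ih h.tail
      rw [hL]
      cases L with
      | nil => rfl
      | cons hd tl =>
        simp only []
        rw [if_neg (List.isChain_cons_cons.1 h).1]

lemma toWord_mk_of_chain {L : List (α × Bool)} (h : List.Chain' R L) :
    (FreeGroup.mk L).toWord = L := by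
  rw [FreeGroup.toWord_mk, (reduce_eq_self_iff L).2 h]

lemma chain'_toWord (g : FreeGroup α) : List.Chain' R g.toWord :=
  (reduce_eq_self_iff _).1 (FreeGroup.reduce_toWord g)

lemma flatten_replicate_nil {β : Type*} (m : ℕ) :
    (List.replicate m ([] : List β)).flatten = [] := by
  induction m with
  | zero => rfl
  | succ m ih => rw [List.replicate_succ, List.flatten_cons, ih]; rfl

lemma length_flatten_replicate {β : Type*} (m : ℕ) (L : List β) :
    (List.replicate m L).flatten.length = m * L.length := by
  simp [List.length_flatten, Nat.mul_comm]

lemma flatten_replicate_ne_nil {β : Type*} {m : ℕ} {L : List β} (hm : 0 < m) (hL : L ≠ []) :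
    (List.replicate m L).flatten ≠ [] := by
  intro h
  have h1 := congrArg List.length h
  rw [length_flatten_replicate] at h1
  simp only [List.length_nil] at h1
  exact (Nat.mul_pos hm (List.length_pos_iff.2 hL)).ne' h1

lemma head?_flatten_replicate {β : Type*} {m : ℕ} (hm : 0 < m) (L : List β) :
    (List.replicate m L).flatten.head? = L.head? := by
  rcases eq_or_ne L [] with rfl | hL
  · rw [flatten_replicate_nil]
  · obtain ⟨m, rfl⟩ : ∃ m', m = m' + 1 := ⟨m - 1, by omega⟩
    rw [List.replicate_succ, List.flatten_cons, List.head?_append_of_ne_nil _ hL]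

lemma getLast?_flatten_replicate {β : Type*} {m : ℕ} (hm : 0 < m) (L : List β) :
    (List.replicate m L).flatten.getLast? = L.getLast? := by
  rcases eq_or_ne L [] with rfl | hL
  · rw [flatten_replicate_nil]
  · induction m with
    | zero => omega
    | succ m ih =>
      rcases Nat.eq_zero_or_pos m with rfl | hm'
      · simp
      · rw [List.replicate_succ, List.flatten_cons,
          List.getLast?_append_of_ne_nil _ (flatten_replicate_ne_nil hm' hL)]
        exact ih hm'

lemma chain'_flatten_replicate {L : List (α × Bool)} (h : List.Chain' R (L ++ L)) (m : ℕ) :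
    List.Chain' R (List.replicate m L).flatten := by
  rcases eq_or_ne L [] with rfl | hL
  · rw [flatten_replicate_nil]; simp [List.Chain']
  · show List.IsChain R _
    rw [List.isChain_flatten (by
      intro hmem
      exact hL (List.eq_of_mem_replicate hmem).symm)]
    refine ⟨fun l hl => ?_, ?_⟩
    · rw [List.eq_of_mem_replicate hl]
      exact h.left_of_append
    · exact List.isChain_replicate_of_rel m (List.isChain_append.1 h).2.2

lemma getElem?_flatten_replicate {β : Type*} (L : List β) :
    ∀ (m i : ℕ), i < m * L.length →
      (List.replicate m L).flatten[i]? = L[i % L.length]? := by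
  intro m
  induction m with
  | zero => intro i h; omega
  | succ m ih =>
    intro i h
    rw [List.replicate_succ, List.flatten_cons]
    by_cases hi : i < L.length
    · rw [List.getElem?_append_left hi, Nat.mod_eq_of_lt hi]
    · push_neg at hi
      have h' : i - L.length < m * L.length := by
        have : (m + 1) * L.length = m * L.length + L.length := by ring
        omega
      rw [List.getElem?_append_right hi, ih (i - L.length) h',
        Nat.mod_eq_sub_mod hi]

lemma invRev_cons (q : α × Bool) (L : List (α × Bool)) :
    FreeGroup.invRev (q :: L) = FreeGroup.invRev L ++ [(q.1, !q.2)] := by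
  simp [FreeGroup.invRev]

/-- Every element of a free group is a conjugate `c * u * c⁻¹` of a cyclically reduced
element `u`, with no cancellation in the concatenation of words. -/
lemma decomp (g : FreeGroup α) : ∃ c u : FreeGroup α,
    g = c * u * c⁻¹ ∧
    g.toWord = c.toWord ++ u.toWord ++ FreeGroup.invRev c.toWord ∧
    List.Chain' R (u.toWord ++ u.toWord) := by
  generalize hN : g.toWord.length = N
  induction N using Nat.strong_induction_on generalizing g with
  | _ N ih =>
  have hchain : List.Chain' R g.toWord := chain'_toWord g
  by_cases hj : ∀ p ∈ g.toWord.getLast?, ∀ q ∈ g.toWord.head?, R p q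
  · refine ⟨1, g, by group, ?_, List.isChain_append.2 ⟨hchain, hchain, hj⟩⟩
    simp [FreeGroup.toWord_one, FreeGroup.invRev]
  · push_neg at hj
    obtain ⟨p, hp, q, hq, hR⟩ := hj
    rw [Option.mem_def] at hp hq
    have hpq : p.1 = q.1 ∧ p.2 = !q.2 := not_not.1 hR
    have hLne : g.toWord ≠ [] := by
      intro h; rw [h] at hq; simp at hq
    obtain ⟨q', ts, hcons⟩ := List.exists_cons_of_ne_nil hLne
    have hq' : q' = q := by
      rw [hcons] at hq
      simp only [List.head?_cons, Option.some.injEq] at hq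
      exact hq
    rw [hq'] at hcons
    have hts : ts ≠ [] := by
      rintro rfl
      have hpq2 : q = p := by
        rw [hcons] at hp
        simp only [List.getLast?_singleton, Option.some.injEq] at hp
        exact hp
      rw [← hpq2] at hpq
      simp at hpq
    have hts_last : ts.getLast? = some p := by
      rw [hcons, show q :: ts = [q] ++ ts from rfl,
        List.getLast?_append_of_ne_nil _ hts] at hp
      exact hp
    obtain ⟨M, hM'⟩ : ∃ M, ts = M ++ [p] := by
      have h1 := List.dropLast_append_getLast hts
      rw [List.getLast?_eq_getLast hts] at hts_last
      injection hts_last with h2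
      exact ⟨ts.dropLast, by rw [← h2]; exact h1.symm⟩
    have hM : g.toWord = q :: M ++ [p] := by rw [hcons, hM']; simp
    have hp_eq : p = (q.1, !q.2) := by
      rcases p with ⟨p1, p2⟩
      rcases hpq with ⟨h1, h2⟩
      simp_all
    -- the middle word
    have hMchain : List.Chain' R M := hchain.infix ⟨[q], [p], by rw [hM]; simp⟩
    have hg1 : (FreeGroup.mk M).toWord = M := toWord_mk_of_chain hMchain
    have hlenM : M.length + 2 = N := by
      have := congrArg List.length hM
      simp at this
      omega
    obtain ⟨c₁, u, hgu, htw, hcu⟩ := ih M.length (by omega) (FreeGroup.mk M) (by rw [hg1])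
    rw [hg1] at htw
    refine ⟨FreeGroup.mk [q] * c₁, u, ?_, ?_, hcu⟩
    · have hginv : (FreeGroup.mk [q])⁻¹ = FreeGroup.mk [p] := by
        rw [FreeGroup.inv_mk, hp_eq]
        simp [FreeGroup.invRev]
      have hgdec : g = FreeGroup.mk [q] * FreeGroup.mk M * (FreeGroup.mk [q])⁻¹ := by
        rw [hginv, FreeGroup.mul_mk, FreeGroup.mul_mk, ← FreeGroup.mk_toWord (x := g), hM]
        congr 1
      rw [hgdec, hgu]
      group
    · have hC1chain : List.Chain' R (q :: c₁.toWord) := by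
        refine hchain.prefix ⟨u.toWord ++ FreeGroup.invRev c₁.toWord ++ [p], ?_⟩
        rw [hM, htw]
        simp
      have htc : (FreeGroup.mk [q] * c₁).toWord = q :: c₁.toWord := by
        conv_lhs => rw [← FreeGroup.mk_toWord (x := c₁)]
        rw [FreeGroup.mul_mk]
        exact toWord_mk_of_chain hC1chain
      rw [htc, hM, htw]
      rw [show FreeGroup.invRev (q :: c₁.toWord)
          = FreeGroup.invRev c₁.toWord ++ [(q.1, !q.2)] from invRev_cons q _, ← hp_eq]
      simp

lemma invRev_append (L M : List (α × Bool)) :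
    FreeGroup.invRev (L ++ M) = FreeGroup.invRev M ++ FreeGroup.invRev L := by
  simp [FreeGroup.invRev]

lemma invRev_flatten_replicate (m : ℕ) (X : List (α × Bool)) :
    FreeGroup.invRev ((List.replicate m X).flatten)
      = (List.replicate m (FreeGroup.invRev X)).flatten := by
  induction m with
  | zero => simp [FreeGroup.invRev]
  | succ m ih =>
    rw [List.replicate_succ, List.flatten_cons, invRev_append, ih]
    conv_rhs => rw [List.replicate_succ']
    rw [List.flatten_append]
    simp

instance : DecidableRel (R (α := α)) :=
  fun p q => inferInstanceAs (Decidable ¬(p.1 = q.1 ∧ p.2 = !q.2))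

end Stmt0Aux

open Stmt0Aux

/-- For every positive integer `n`, the element `wₙ = (ab)ⁿ(ba)⁻ⁿ` of the free group `F₂`
on two generators `a`, `b` is nontrivial and is not a proper power: there is no `g ∈ F₂`
and integer `k ≥ 2` with `gᵏ = wₙ`. -/
theorem stmt_0 (n : ℕ) (hn : 0 < n)
    (a b : FreeGroup (Fin 2)) (ha : a = FreeGroup.of 0) (hb : b = FreeGroup.of 1)
    (w : FreeGroup (Fin 2)) (hw : w = (a * b) ^ n * ((b * a) ^ n)⁻¹) :
    w ≠ 1 ∧ ¬ ∃ (g : FreeGroup (Fin 2)) (k : ℤ), 2 ≤ k ∧ g ^ k = w := by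
  subst ha hb hw
  set P : List (Fin 2 × Bool) := [(0, true), (1, true)] with hP
  set Nl : List (Fin 2 × Bool) := [(0, false), (1, false)] with hNl
  set A : List (Fin 2 × Bool) := (List.replicate n P).flatten with hA
  set B : List (Fin 2 × Bool) := (List.replicate n Nl).flatten with hB
  have hPlen : P.length = 2 := rfl
  have hNlen : Nl.length = 2 := rfl
  have hPne : P ≠ [] := by simp [hP]
  have hNne : Nl ≠ [] := by simp [hNl]
  have hAne : A ≠ [] := flatten_replicate_ne_nil hn hPne
  have hBne : B ≠ [] := flatten_replicate_ne_nil hn hNne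
  have hlenA : A.length = 2 * n := by rw [hA, length_flatten_replicate, hPlen]; ring
  have hlenB : B.length = 2 * n := by rw [hB, length_flatten_replicate, hNlen]; ring
  have hwmk : (FreeGroup.of (0:Fin 2) * FreeGroup.of 1) ^ n
      * ((FreeGroup.of (1:Fin 2) * FreeGroup.of 0) ^ n)⁻¹ = FreeGroup.mk (A ++ B) := by
    have h1 : (FreeGroup.of (0:Fin 2) * FreeGroup.of 1) ^ n = FreeGroup.mk A := by
      rw [show FreeGroup.of (0:Fin 2) * FreeGroup.of (1:Fin 2) = FreeGroup.mk P by
        rw [FreeGroup.of, FreeGroup.of, FreeGroup.mul_mk]; rfl]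
      exact FreeGroup.pow_mk n
    have h2 : ((FreeGroup.of (1:Fin 2) * FreeGroup.of 0) ^ n)⁻¹ = FreeGroup.mk B := by
      rw [show FreeGroup.of (1:Fin 2) * FreeGroup.of (0:Fin 2)
          = FreeGroup.mk [((1:Fin 2),true),(0,true)] by
        rw [FreeGroup.of, FreeGroup.of, FreeGroup.mul_mk]; rfl]
      rw [FreeGroup.pow_mk, FreeGroup.inv_mk, invRev_flatten_replicate]
      rw [show FreeGroup.invRev [((1:Fin 2),true),(0,true)] = Nl by
        simp [FreeGroup.invRev, hNl]]
    rw [h1, h2, FreeGroup.mul_mk]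
  have hcP : List.Chain' R (P ++ P) := by rw [hP]; simp [List.Chain', R]
  have hcN : List.Chain' R (Nl ++ Nl) := by rw [hNl]; simp [List.Chain', R]
  have hcA : List.Chain' R A := chain'_flatten_replicate hcP n
  have hcB : List.Chain' R B := chain'_flatten_replicate hcN n
  have hheadA : A.head? = some (0, true) := by
    rw [hA, head?_flatten_replicate hn]; rfl
  have hheadB : B.head? = some (0, false) := by
    rw [hB, head?_flatten_replicate hn]; rfl
  have hlastA : A.getLast? = some (1, true) := by
    rw [hA, getLast?_flatten_replicate hn]; rfl
  have hlastB : B.getLast? = some (1, false) := by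
    rw [hB, getLast?_flatten_replicate hn]; rfl
  have hcW : List.Chain' R (A ++ B) := by
    refine hcA.append hcB ?_
    rw [hlastA, hheadB]
    rintro x hx y hy
    rw [Option.mem_def, Option.some.injEq] at hx hy
    subst hx; subst hy
    simp [R]
  have htwW : ((FreeGroup.of (0:Fin 2) * FreeGroup.of 1) ^ n
      * ((FreeGroup.of (1:Fin 2) * FreeGroup.of 0) ^ n)⁻¹).toWord = A ++ B := by
    rw [hwmk]; exact toWord_mk_of_chain hcW
  have hABne : A ++ B ≠ [] := by simp [hAne]
  constructor
  · intro h1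
    rw [← FreeGroup.toWord_eq_nil_iff, htwW] at h1
    exact hABne h1
  · rintro ⟨g, k, hk2, hgk⟩
    have hm2 : 2 ≤ k.toNat := by omega
    set m := k.toNat with hmdef
    have hgm : g ^ m = (FreeGroup.of (0:Fin 2) * FreeGroup.of 1) ^ n
        * ((FreeGroup.of (1:Fin 2) * FreeGroup.of 0) ^ n)⁻¹ := by
      rw [← hgk, ← zpow_natCast, hmdef, Int.toNat_of_nonneg (by omega)]
    obtain ⟨c, u, hdec, htg, hcu⟩ := decomp g
    by_cases hu : u = 1
    · have hg1 : g = 1 := by rw [hdec, hu]; group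
      rw [hg1, one_pow] at hgm
      have := congrArg FreeGroup.toWord hgm
      rw [FreeGroup.toWord_one, htwW] at this
      exact hABne this.symm
    · have hUne : u.toWord ≠ [] := fun h => hu (FreeGroup.toWord_eq_nil_iff.1 h)
      set C := c.toWord with hCdef
      set U := u.toWord with hUdef
      set FU : List (Fin 2 × Bool) := (List.replicate m U).flatten with hFU
      have hFUne : FU ≠ [] := flatten_replicate_ne_nil (by omega) hUne
      have hcmk : c = FreeGroup.mk C := FreeGroup.mk_toWord.symm
      have humk : u = FreeGroup.mk U := FreeGroup.mk_toWord.symm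
      have hwmk2 : (FreeGroup.of (0:Fin 2) * FreeGroup.of 1) ^ n
          * ((FreeGroup.of (1:Fin 2) * FreeGroup.of 0) ^ n)⁻¹
          = FreeGroup.mk (C ++ FU ++ FreeGroup.invRev C) := by
        rw [← hgm, hdec, conj_pow, hcmk, humk, FreeGroup.pow_mk, FreeGroup.inv_mk,
          FreeGroup.mul_mk, FreeGroup.mul_mk]
      have hLg : List.Chain' R (C ++ (U ++ FreeGroup.invRev C)) := by
        have h := chain'_toWord g
        rw [htg] at h
        rwa [List.append_assoc] at h
      obtain ⟨hC, hUV, hjC⟩ := List.isChain_append.1 hLg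
      obtain ⟨hUc, hV, hjU⟩ := List.isChain_append.1 hUV
      have hchain2 : List.Chain' R (C ++ FU ++ FreeGroup.invRev C) := by
        rw [List.append_assoc]
        refine hC.append ((chain'_flatten_replicate hcu m).append hV ?_) ?_
        · rw [← hFU, show FU.getLast? = U.getLast? from by
            rw [hFU, getLast?_flatten_replicate (by omega)]]
          exact hjU
        · intro x hx y hy
          rw [List.head?_append_of_ne_nil _ hFUne, hFU,
            head?_flatten_replicate (by omega)] at hy
          apply hjC x hx
          rw [List.head?_append_of_ne_nil _ hUne]
          exact hy
      have hEq : A ++ B = C ++ FU ++ FreeGroup.invRev C := by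
        rw [← htwW, hwmk2]
        exact toWord_mk_of_chain hchain2
      have hCnil : C = [] := by
        by_contra hC0
        have hInvCne : FreeGroup.invRev C ≠ [] := by
          intro h
          apply hC0
          have h2 := congrArg List.length h
          rw [FreeGroup.invRev_length] at h2
          exact List.length_eq_zero_iff.1 h2
        obtain ⟨c0, C', hC'⟩ := List.exists_cons_of_ne_nil hC0
        have h1 : (A ++ B).head? = some c0 := by
          rw [hEq, List.append_assoc, List.head?_append_of_ne_nil _ hC0, hC']; rfl
        have h2 : (A ++ B).head? = some ((0:Fin 2), true) := by
          rw [List.head?_append_of_ne_nil _ hAne, hheadA]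
        have hc0 : c0 = ((0:Fin 2), true) := by
          rw [h1] at h2; injection h2
        have h3 : (A ++ B).getLast? = some (c0.1, !c0.2) := by
          rw [hEq, List.getLast?_append_of_ne_nil _ hInvCne, hC', Stmt0Aux.invRev_cons,
            List.getLast?_append_of_ne_nil _ (by simp : [(c0.1, !c0.2)] ≠ [])]
          rfl
        have h4 : (A ++ B).getLast? = some ((1:Fin 2), false) := by
          rw [List.getLast?_append_of_ne_nil _ hBne, hlastB]
        rw [hc0, h4] at h3
        simp at h3
      have hEq2 : A ++ B = FU := by
        rw [hEq, hCnil]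
        simp [FreeGroup.invRev]
      have hplen : 0 < U.length := List.length_pos_iff.2 hUne
      have hlen4 : m * U.length = 2 * n + 2 * n := by
        have h5 := congrArg List.length hEq2
        rw [List.length_append, hlenA, hlenB, hFU, length_flatten_replicate] at h5
        omega
      have hple : U.length ≤ 2 * n := by
        have h6 : 2 * U.length ≤ m * U.length := Nat.mul_le_mul_right _ hm2
        omega
      have hUtrue : ∀ x ∈ U, x.2 = true := by
        have hUtake : U = A.take U.length := by
          obtain ⟨m', hm'⟩ : ∃ m', m = m' + 1 := ⟨m - 1, by omega⟩
          have h7 : FU = U ++ (List.replicate m' U).flatten := by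
            rw [hFU, hm', List.replicate_succ, List.flatten_cons]
          calc U = (U ++ (List.replicate m' U).flatten).take U.length :=
                List.take_left.symm
            _ = (A ++ B).take U.length := by rw [← h7, hEq2]
            _ = A.take U.length ++ B.take (U.length - A.length) :=
                List.take_append
            _ = A.take U.length := by
                rw [hlenA, show U.length - 2 * n = 0 by omega]
                simp
        intro x hx
        rw [hUtake] at hx
        have hxA : x ∈ A := List.take_subset _ _ hx
        obtain ⟨l, hl, hxl⟩ := List.mem_flatten.1 hxA
        rw [List.eq_of_mem_replicate hl, hP] at hxl
        simp at hxl
        rcases hxl with rfl | rfl <;> rfl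
      have hidx1 : (A ++ B)[2 * n]? = some ((0:Fin 2), false) := by
        rw [List.getElem?_append_right (by omega : A.length ≤ 2 * n), hlenA,
          Nat.sub_self]
        have h8 : B[0]? = B.head? := by
          cases B <;> simp
        rw [h8, hheadB]
      have hidx2 : (A ++ B)[2 * n]? = U[(2 * n) % U.length]? := by
        rw [hEq2, hFU]
        exact getElem?_flatten_replicate U m (2 * n) (by omega)
      have hmem : ((0:Fin 2), false) ∈ U := by
        rw [hidx1] at hidx2
        exact List.mem_iff_getElem?.2 ⟨_, hidx2.symm⟩
      have := hUtrue _ hmem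
      simp at this
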